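/- Let (Γ(t))_{t ≥ 0} be an adapted real-valued process with respect to a filtration (F_t), and let K, η, D > 0 with η ≤ K. Assume (i) |Γ(t+1) − Γ(t)| ≤ K almost surely, (ii) E[Γ(t+1) − Γ(t) | F_t] ≤ −η on the event {Γ(t) ≥ D}, and (iii) Γ(0) ≤ K + D. Then for every t, E[Γ(t)] ≤ K(1 + ⌈D/K⌉) + K(K − η)/(2η). -/

import Mathlib

set_option maxHeartbeats 1000000

open MeasureTheory

/- ===== auxiliary real-analysis lemmas ===== -/

lemma drift_chord (w d : ℝ) (hd : |d| ≤ 1) :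
    max (w + d) 0 ≤ max (w - 1) 0 + (max (w + 1) 0 - max (w - 1) 0) * (1 + d) / 2 := by
  obtain ⟨h1, h2⟩ := abs_le.mp hd
  rcases le_total (w + 1) 0 with h | h
  · rw [max_eq_right h, max_eq_right (by linarith), max_eq_right (by linarith)]
    norm_num
  · rcases le_total 0 (w - 1) with h' | h'
    · rw [max_eq_left h', max_eq_left (by linarith), max_eq_left (by linarith)]
      ring_nf; nlinarith
    · rw [max_eq_right h', max_eq_left h]
      rcases le_total (w + d) 0 with h'' | h''
      · rw [max_eq_right h'']; nlinarith
      · rw [max_eq_left h'']; nlinarith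

lemma drift_reflect (u c : ℝ) (hc : 0 ≤ c) : max (max u 0 - c) 0 ≤ max (u - c) 0 := by
  rcases le_total u 0 with h | h
  · rw [max_eq_right h, max_eq_right (by linarith)]
    exact le_max_right _ _
  · rw [max_eq_left h]

lemma drift_min_eq (y : ℝ) : min y 1 = y - max (y - 1) 0 := by
  rcases le_total y 1 with h | h
  · rw [min_eq_left h, max_eq_right (by linarith)]; ring
  · rw [min_eq_right h, max_eq_left (by linarith)]; ring

/- ===== the certificate function ===== -/

noncomputable def driftG (β x : ℝ) : ℝ :=
  if x ≤ 1 - (1 - β) / (1 + β) then (1 + β) / (2 * β) - 2 * x / (1 + β)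
  else (1 - β) / (1 + β) * ((1 + β) / (2 * β) + 1 - x)

section driftG
variable {β : ℝ} (hβ0 : 0 < β) (hβ1 : β ≤ 1)
include hβ0 hβ1

lemma driftG_zero : driftG β 0 = (1 + β) / (2 * β) := by
  have hb : (0:ℝ) < 1 + β := by linarith
  have h1 : (0:ℝ) ≤ 1 - (1 - β) / (1 + β) := by
    rw [sub_nonneg, div_le_one hb]; linarith
  simp [driftG, h1]

lemma driftG_nonneg {x : ℝ} (hx0 : 0 ≤ x) (hx1 : x < 1) : 0 ≤ driftG β x := by
  have hb : (0:ℝ) < 1 + β := by linarith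
  have h2b : (0:ℝ) < 2 * β := by linarith
  unfold driftG
  split_ifs with h
  · rw [sub_nonneg, div_le_div_iff₀ hb h2b]; nlinarith
  · have h3 : (0:ℝ) ≤ 1 - β := by linarith
    have hB : 0 < (1 + β) / (2 * β) := by positivity
    have h4 : 0 ≤ (1 - β) / (1 + β) := by positivity
    nlinarith [hB]

lemma driftG_base {x : ℝ} (hx0 : 0 ≤ x) (hx1 : x < 1) : 1 - x ≤ driftG β x := by
  have hb : (0:ℝ) < 1 + β := by linarith
  have h2b : (0:ℝ) < 2 * β := by linarith
  unfold driftG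
  split_ifs with h
  · rw [← sub_nonneg]
    have e : (1 + β) / (2 * β) - 2 * x / (1 + β) - (1 - x)
        = ((1+β)*(1+β) - 2*β*(2*x) - (1-x)*(2*β*(1+β))) / ((2*β)*(1+β)) := by
      field_simp
    rw [e]
    apply div_nonneg _ (by positivity)
    have e2 : (1+β)*(1+β) - 2*β*(2*x) - (1-x)*(2*β*(1+β)) = (1-β)*(1+β-2*β*x) := by ring
    rw [e2]
    apply mul_nonneg (by linarith)
    nlinarith
  · push_neg at h
    have h' : (1 - x) * (1 + β) < 1 - β := by
      rw [← lt_div_iff₀ hb]; linarith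
    rw [← sub_nonneg]
    have e : (1 - β) / (1 + β) * ((1 + β) / (2 * β) + 1 - x) - (1 - x)
        = ((1-β)*((1+β) + (2*β)*(1-x)) - (1-x)*((2*β)*(1+β))) / ((1+β)*(2*β)) := by
      field_simp; ring
    rw [e]
    apply div_nonneg _ (by positivity)
    nlinarith [sq_nonneg (1-β), mul_pos hβ0 hβ0]

omit hβ1 in
lemma driftG_hi (x : ℝ) (n : ℕ) :
    (1 - (1-β)/2) * (((1-β)/(1+β))^(n+2) * driftG β x) + (1-β)/2 * (((1-β)/(1+β))^n * driftG β x)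
      = ((1-β)/(1+β))^(n+1) * driftG β x := by
  have hb : (0:ℝ) < 1 + β := by linarith
  have key : (1 - (1-β)/2) * ((1-β)/(1+β))^2 + (1-β)/2 = (1-β)/(1+β) := by
    field_simp; ring
  calc (1 - (1-β)/2) * (((1-β)/(1+β))^(n+2) * driftG β x)
        + (1-β)/2 * (((1-β)/(1+β))^n * driftG β x)
      = ((1 - (1-β)/2) * ((1-β)/(1+β))^2 + (1-β)/2) * (((1-β)/(1+β))^n * driftG β x) := by
        ring
    _ = ((1-β)/(1+β))^(n+1) * driftG β x := by rw [key]; ring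

omit hβ1 in
lemma driftG_lo1 {x : ℝ} (hx : x ≤ 1 - (1-β)/(1+β)) :
    (1 - (1-β)/2) * ((1-β)/(1+β) * driftG β x) + (1-x)
      + (1-β)/2 * ((1-β)/(1+β) * driftG β 0) = driftG β x := by
  have hb : (0:ℝ) < 1 + β := by linarith
  have h1 : (0:ℝ) ≤ 1 - (1 - β) / (1 + β) := by
    rw [sub_nonneg, div_le_one hb]; linarith
  unfold driftG
  rw [if_pos hx, if_pos h1]
  field_simp
  ring

omit hβ1 in
lemma driftG_lo2 {x : ℝ} (hx : ¬ (x ≤ 1 - (1-β)/(1+β))) :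
    (1 - (1-β)/2) * ((1-β)/(1+β) * driftG β x) + (1-x)
      + ((1-β)/2 - (1 - (1-β)/2)*(1-x)) * driftG β 0
      + (1 - (1-β)/2)*(1-x) * ((1-β)/(1+β) * driftG β 0) = driftG β x := by
  have hb : (0:ℝ) < 1 + β := by linarith
  have h1 : (0:ℝ) ≤ 1 - (1 - β) / (1 + β) := by
    rw [sub_nonneg, div_le_one hb]; linarith
  unfold driftG
  rw [if_neg hx, if_pos h1]
  field_simp
  ring

omit hβ1 in
lemma driftG_kneg {x : ℝ} (hx : x ≤ 1 - (1-β)/(1+β)) :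
    (1-β)/2 - (1 - (1-β)/2)*(1-x) ≤ 0 := by
  have hb : (0:ℝ) < 1 + β := by linarith
  have h' : (1-β)/(1+β) ≤ 1 - x := by linarith
  have h2 : (1 - (1-β)/2) * ((1-β)/(1+β)) ≤ (1 - (1-β)/2) * (1-x) :=
    mul_le_mul_of_nonneg_left h' (by linarith)
  have e : (1 - (1-β)/2) * ((1-β)/(1+β)) = (1-β)/2 := by
    field_simp; ring
  linarith [e ▸ h2]

omit hβ1 in
lemma driftG_kpos {x : ℝ} (hx : ¬ (x ≤ 1 - (1-β)/(1+β))) :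
    0 ≤ (1-β)/2 - (1 - (1-β)/2)*(1-x) := by
  have hb : (0:ℝ) < 1 + β := by linarith
  push_neg at hx
  have h' : 1 - x < (1-β)/(1+β) := by linarith
  have h2 : (1 - (1-β)/2) * (1-x) ≤ (1 - (1-β)/2) * ((1-β)/(1+β)) :=
    mul_le_mul_of_nonneg_left (le_of_lt h') (by linarith)
  have e : (1 - (1-β)/2) * ((1-β)/(1+β)) = (1-β)/2 := by
    field_simp; ring
  linarith [e ▸ h2]

end driftG

lemma drift_max_sub_le (v : ℝ) : max v 0 ≤ max (v - 2) 0 + 2 := by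
  rcases le_total v 0 with h | h
  · rw [max_eq_right h]; positivity
  · rw [max_eq_left h]
    have : v - 2 ≤ max (v-2) 0 := le_max_left _ _
    linarith

/-- Drift lemma (Wei et al. 2023, Lemma 5): an adapted process with bounded increments and
negative conditional drift above level `D` has a uniform-in-time bound on its expectation. -/
theorem stmt_11 {Ω : Type*} {m0 : MeasurableSpace Ω} (μ : Measure Ω) [IsProbabilityMeasure μ]
    (ℱ : Filtration ℕ m0) (Γ : ℕ → Ω → ℝ) (hadapted : Adapted ℱ Γ)
    (K η D : ℝ) (hK : 0 < K) (hη : 0 < η) (hD : 0 < D) (hηK : η ≤ K)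
    (hΓ0int : Integrable (Γ 0) μ)
    (hbdd : ∀ t : ℕ, ∀ᵐ ω ∂μ, |Γ (t + 1) ω - Γ t ω| ≤ K)
    (hdrift : ∀ t : ℕ, ∀ᵐ ω ∂μ, D ≤ Γ t ω →
      (μ[fun ω => Γ (t + 1) ω - Γ t ω | ℱ t]) ω ≤ -η)
    (hinit : ∀ᵐ ω ∂μ, Γ 0 ω ≤ K + D)
    (t : ℕ) :
    ∫ ω, Γ t ω ∂μ ≤ K * (1 + (⌈D / K⌉ : ℝ)) + K * ((K - η) / (2 * η)) := by
  have hK0 : (0:ℝ) < K := hK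
  set β : ℝ := η / K with hβdef
  have hβ0 : 0 < β := div_pos hη hK0
  have hβ1 : β ≤ 1 := by rw [hβdef, div_le_one hK0]; exact hηK
  set p : ℝ := (1-β)/2 with hpdef
  set r : ℝ := (1-β)/(1+β) with hrdef
  have hp0 : 0 ≤ p := by rw [hpdef]; linarith
  have hp1 : p ≤ 1 := by rw [hpdef]; linarith
  have hr0 : 0 ≤ r := by
    rw [hrdef]; apply div_nonneg (by linarith) (by linarith)
  set a : ℝ := K * (⌈D / K⌉ : ℝ) with hadef
  have haD : D ≤ a := by
    have h1 : D / K ≤ (⌈D / K⌉ : ℝ) := Int.le_ceil _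
    calc D = (D / K) * K := by field_simp
      _ ≤ (⌈D / K⌉ : ℝ) * K := mul_le_mul_of_nonneg_right h1 hK0.le
      _ = a := by rw [hadef]; ring
  set Y : ℕ → Ω → ℝ := fun s ω => max ((Γ s ω - a) * K⁻¹) 0 with hYdef
  have hY0 : ∀ s ω, 0 ≤ Y s ω := fun s ω => le_max_right _ _
  have hYmeas : ∀ s, Measurable[ℱ s] (Y s) := fun s =>
    (((hadapted s).sub measurable_const).mul_const _).max measurable_const
  have hYsm : ∀ s, StronglyMeasurable[ℱ s] (Y s) := fun s => (hYmeas s).stronglyMeasurable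
  have hYm : ∀ s, AEStronglyMeasurable (Y s) μ :=
    fun s => ((hYsm s).mono (ℱ.le s)).aestronglyMeasurable
  -- boundedness of Y
  have hYb : ∀ s : ℕ, ∀ᵐ ω ∂μ, Y s ω ≤ 1 + s := by
    intro s
    induction s with
    | zero =>
      filter_upwards [hinit] with ω h
      have h1 : (Γ 0 ω - a) * K⁻¹ ≤ 1 := by
        have h2 : Γ 0 ω - a ≤ K := by linarith
        have h3 := mul_le_mul_of_nonneg_right h2 (inv_nonneg.mpr hK0.le)
        rwa [mul_inv_cancel₀ (ne_of_gt hK0)] at h3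
      simp only [hYdef]
      push_cast
      exact max_le (by linarith) (by norm_num)
    | succ s ih =>
      filter_upwards [ih, hbdd s] with ω h1 h2
      have hstep : (Γ (s+1) ω - a) * K⁻¹ ≤ Y s ω + 1 := by
        have h3 : Γ (s+1) ω - a ≤ (Γ s ω - a) + K := by
          have := (abs_le.mp h2).2; linarith
        have h4 : (Γ (s+1) ω - a) * K⁻¹ ≤ ((Γ s ω - a) + K) * K⁻¹ :=
          mul_le_mul_of_nonneg_right h3 (by positivity)
        have h5 : ((Γ s ω - a) + K) * K⁻¹ = (Γ s ω - a) * K⁻¹ + 1 := by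
          field_simp
        rw [h5] at h4
        have h6 : (Γ s ω - a) * K⁻¹ ≤ Y s ω := le_max_left _ _
        linarith
      have : Y (s+1) ω ≤ max (Y s ω + 1) 0 := by
        simp only [hYdef]
        exact max_le (le_max_of_le_left hstep) (le_max_right _ _)
      have h7 : max (Y s ω + 1) 0 = Y s ω + 1 :=
        max_eq_left (by have := hY0 s ω; linarith)
      push_cast
      rw [h7] at this
      linarith
  -- integrability of truncations
  have hMint : ∀ (s : ℕ) (c : ℝ), Integrable (fun ω => max (Y s ω - c) 0) μ := by
    intro s c
    refine (integrable_const ((1+s:ℝ) + |c|)).mono' ?_ ?_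
    · exact ((((hYmeas s).mono (ℱ.le s) le_rfl).sub measurable_const).max
        measurable_const).aestronglyMeasurable
    · filter_upwards [hYb s] with ω h
      rw [Real.norm_eq_abs, abs_of_nonneg (le_max_right _ _)]
      have := hY0 s ω
      have := neg_abs_le c
      exact max_le (by linarith) (by positivity)
  have hYint : ∀ s : ℕ, Integrable (Y s) μ := by
    intro s
    have h := hMint s 0
    have e : (fun ω => max (Y s ω - 0) 0) = Y s := by
      funext ω; rw [sub_zero]; exact max_eq_left (hY0 s ω)
    rwa [e] at h
  -- the key one-step inequality
  have key : ∀ (s : ℕ) (c : ℝ), 0 ≤ c →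
      (∫ ω, max (Y (s+1) ω - c) 0 ∂μ) ≤
        (1-p) * (∫ ω, max (Y s ω - (c+1)) 0 ∂μ)
        + p * (∫ ω, max (Y s ω - (c-1)) 0 ∂μ)
        + (1-p) * max (1-c) 0 *
            (1 - ((∫ ω, Y s ω ∂μ) - (∫ ω, max (Y s ω - 1) 0 ∂μ))) := by
    intro s c hc
    haveI : SigmaFinite (μ.trim (ℱ.le s)) := inferInstance
    set δ : Ω → ℝ := fun ω => (Γ (s+1) ω - Γ s ω) * K⁻¹ with hδdef
    have hδb : ∀ᵐ ω ∂μ, |δ ω| ≤ 1 := by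
      filter_upwards [hbdd s] with ω h
      rw [hδdef]
      rw [abs_mul, abs_inv, abs_of_pos hK0]
      calc |Γ (s+1) ω - Γ s ω| * K⁻¹ ≤ K * K⁻¹ :=
            mul_le_mul_of_nonneg_right h (inv_nonneg.mpr hK0.le)
        _ = 1 := mul_inv_cancel₀ (ne_of_gt hK0)
    have hδm : Measurable δ :=
      (((hadapted (s+1)).mono (ℱ.le (s+1)) le_rfl).sub
        ((hadapted s).mono (ℱ.le s) le_rfl)).mul_const _
    have hδint : Integrable δ μ := (integrable_const 1).mono' hδm.aestronglyMeasurable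
        (by filter_upwards [hδb] with ω h; rwa [Real.norm_eq_abs])
    have hce1 : μ[δ | ℱ s] ≤ᵐ[μ] fun _ => (1:ℝ) := by
      have h1 : μ[δ | ℱ s] ≤ᵐ[μ] μ[(fun _ => (1:ℝ)) | ℱ s] :=
        condExp_mono hδint (integrable_const 1)
          (by filter_upwards [hδb] with ω h; exact (abs_le.mp h).2)
      have h2 : μ[(fun _ => (1:ℝ)) | ℱ s] =ᵐ[μ] fun _ => (1:ℝ) :=
        Filter.EventuallyEq.of_eq (condExp_const (μ := μ) (ℱ.le s) (1:ℝ))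
      filter_upwards [h1, h2] with ω ha hb
      rw [hb] at ha; exact ha
    have hceA : ∀ᵐ ω ∂μ, D ≤ Γ s ω → (μ[δ | ℱ s]) ω ≤ -β := by
      have hsc : μ[δ | ℱ s] =ᵐ[μ]
          fun ω => K⁻¹ * ((μ[fun ω' => Γ (s+1) ω' - Γ s ω' | ℱ s]) ω) := by
        have h := condExp_smul (μ := μ) (m := ℱ s) (K⁻¹) (fun ω' => Γ (s+1) ω' - Γ s ω')
        have e : (K⁻¹ • fun ω' => Γ (s+1) ω' - Γ s ω') = δ := by
          funext ω; rw [hδdef]; simp [smul_eq_mul]; ring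
        rw [e] at h
        filter_upwards [h] with ω hω
        rw [hω]; simp [smul_eq_mul]
      filter_upwards [hsc, hdrift s] with ω h1 h2 hDω
      rw [h1]
      have h3 := h2 hDω
      have h4 : K⁻¹ * ((μ[fun ω' => Γ (s+1) ω' - Γ s ω' | ℱ s]) ω) ≤ K⁻¹ * (-η) :=
        mul_le_mul_of_nonneg_left h3 (inv_nonneg.mpr hK0.le)
      have e2 : K⁻¹ * (-η) = -β := by rw [hβdef]; field_simp
      linarith [e2 ▸ h4]
    -- the auxiliary functions
    set U : Ω → ℝ := fun ω => max (Y s ω - (c-1)) 0 with hUdef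
    set A0 : Ω → ℝ := fun ω => max (Y s ω - (c+1)) 0 with hA0def
    set Hf : Ω → ℝ := fun ω => (U ω - A0 ω)/2 with hHdef
    have hUA : ∀ ω, A0 ω ≤ U ω := by
      intro ω; exact max_le_max (by linarith) le_rfl
    have hH0 : ∀ ω, 0 ≤ Hf ω := by
      intro ω; rw [hHdef]
      have := hUA ω
      have h2 : (0:ℝ) ≤ U ω - A0 ω := by linarith
      positivity
    have hH1 : ∀ ω, Hf ω ≤ 1 := by
      intro ω; rw [hHdef]
      have h := drift_max_sub_le (Y s ω - (c-1))
      have e : Y s ω - (c-1) - 2 = Y s ω - (c+1) := by ring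
      rw [e] at h
      rw [hUdef, hA0def]
      simp only []
      linarith
    have hUint : Integrable U μ := hMint s (c-1)
    have hA0int : Integrable A0 μ := hMint s (c+1)
    have hHint : Integrable Hf μ := (hUint.sub hA0int).div_const 2
    have hUmeas : Measurable[ℱ s] U := ((hYmeas s).sub measurable_const).max measurable_const
    have hA0meas : Measurable[ℱ s] A0 := ((hYmeas s).sub measurable_const).max measurable_const
    have hHmeas : Measurable[ℱ s] Hf := (hUmeas.sub hA0meas).div_const 2
    have hHsm : StronglyMeasurable[ℱ s] Hf := hHmeas.stronglyMeasurable
    have hHδint : Integrable (fun ω => Hf ω * δ ω) μ := by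
      refine (integrable_const 1).mono'
        (((hHmeas.mono (ℱ.le s) le_rfl).mul hδm).aestronglyMeasurable) ?_
      filter_upwards [hδb] with ω h
      rw [Real.norm_eq_abs, abs_mul]
      have h1 := hH0 ω
      have h2 := hH1 ω
      have h3 := abs_nonneg (δ ω)
      calc |Hf ω| * |δ ω| = Hf ω * |δ ω| := by rw [abs_of_nonneg h1]
        _ ≤ 1 * 1 := mul_le_mul h2 h h3 (by norm_num)
        _ = 1 := by norm_num
    -- step 1 : pointwise chord bound
    have hstep1 : ∀ᵐ ω ∂μ,
        max (Y (s+1) ω - c) 0 ≤ (A0 ω + Hf ω) + Hf ω * δ ω := by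
      filter_upwards [hδb] with ω hd
      have hYr : Y (s+1) ω ≤ max (Y s ω + δ ω) 0 := by
        apply max_le _ (le_max_right _ _)
        have e : (Γ (s+1) ω - a) * K⁻¹ = (Γ s ω - a) * K⁻¹ + δ ω := by
          rw [hδdef]; ring
        rw [e]
        have h6 : (Γ s ω - a) * K⁻¹ ≤ Y s ω := le_max_left _ _
        have : (Γ s ω - a) * K⁻¹ + δ ω ≤ Y s ω + δ ω := by linarith
        exact this.trans (le_max_left _ _)
      have h2 : max (Y (s+1) ω - c) 0 ≤ max (max (Y s ω + δ ω) 0 - c) 0 :=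
        max_le_max (by linarith) le_rfl
      have h3 := drift_reflect (Y s ω + δ ω) c hc
      have h4 := drift_chord (Y s ω - c) (δ ω) hd
      have e4 : Y s ω - c + δ ω = Y s ω + δ ω - c := by ring
      rw [e4] at h4
      have e5 : Y s ω - c - 1 = Y s ω - (c+1) := by ring
      have e6 : Y s ω - c + 1 = Y s ω - (c-1) := by ring
      rw [e5, e6] at h4
      have efin : max (Y s ω - (c+1)) 0
            + (max (Y s ω - (c-1)) 0 - max (Y s ω - (c+1)) 0) * (1 + δ ω) / 2
          = (A0 ω + Hf ω) + Hf ω * δ ω := by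
        simp only [hHdef, hUdef, hA0def]; ring
      rw [efin] at h4
      exact (h2.trans h3).trans h4
    -- step 2 : apply conditional expectation
    have hsum_int : Integrable (fun ω => (A0 ω + Hf ω) + Hf ω * δ ω) μ :=
      (hA0int.add hHint).add hHδint
    have hce_step : μ[fun ω => max (Y (s+1) ω - c) 0 | ℱ s] ≤ᵐ[μ]
        fun ω => (A0 ω + Hf ω) + Hf ω * ((μ[δ | ℱ s]) ω) := by
      have hmono := condExp_mono (μ := μ) (m := ℱ s) (hMint (s+1) c) hsum_int hstep1
      have hadd := condExp_add (μ := μ) (m := ℱ s) (hA0int.add hHint) hHδint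
      have hAH : μ[fun ω => A0 ω + Hf ω | ℱ s] =ᵐ[μ] fun ω => A0 ω + Hf ω := by
        apply Filter.EventuallyEq.of_eq
        exact condExp_of_stronglyMeasurable (ℱ.le s)
          ((hA0meas.stronglyMeasurable).add hHsm) (hA0int.add hHint)
      have hmul : μ[fun ω => Hf ω * δ ω | ℱ s] =ᵐ[μ] fun ω => Hf ω * ((μ[δ | ℱ s]) ω) :=
        condExp_mul_of_stronglyMeasurable_left hHsm hHδint hδint
      calc μ[fun ω => max (Y (s+1) ω - c) 0 | ℱ s]
          ≤ᵐ[μ] μ[fun ω => (A0 ω + Hf ω) + Hf ω * δ ω | ℱ s] := hmono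
        _ =ᵐ[μ] fun ω => (A0 ω + Hf ω) + Hf ω * ((μ[δ | ℱ s]) ω) := by
            calc μ[fun ω => (A0 ω + Hf ω) + Hf ω * δ ω | ℱ s]
                =ᵐ[μ] μ[fun ω => A0 ω + Hf ω | ℱ s] + μ[fun ω => Hf ω * δ ω | ℱ s] := hadd
              _ =ᵐ[μ] fun ω => (A0 ω + Hf ω) + Hf ω * ((μ[δ | ℱ s]) ω) := by
                  filter_upwards [hAH, hmul] with ω e1 e2
                  simp only [Pi.add_apply]
                  rw [e1, e2]
    -- step 3 : pointwise bound on the conditional expectation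
    have hstep3 : (fun ω => (A0 ω + Hf ω) + Hf ω * ((μ[δ | ℱ s]) ω)) ≤ᵐ[μ]
        fun ω => (1-p) * A0 ω + p * U ω + (1-p) * max (1-c) 0 * (1 - min (Y s ω) 1) := by
      filter_upwards [hce1, hceA] with ω h1 hA
      by_cases hDω : D ≤ Γ s ω
      · have hδc := hA hDω
        have hb1 : Hf ω * ((μ[δ | ℱ s]) ω) ≤ Hf ω * (-β) :=
          mul_le_mul_of_nonneg_left hδc (hH0 ω)
        have heq : A0 ω + Hf ω + Hf ω * (-β) = (1-p) * A0 ω + p * U ω := by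
          rw [hHdef, hpdef]; ring
        have hpos : 0 ≤ (1-p) * max (1-c) 0 * (1 - min (Y s ω) 1) := by
          apply mul_nonneg (mul_nonneg (by linarith) (le_max_right _ _))
          have : min (Y s ω) 1 ≤ 1 := min_le_right _ _
          linarith
        linarith [heq ▸ (by linarith [hb1] : A0 ω + Hf ω + Hf ω * ((μ[δ | ℱ s]) ω) ≤ A0 ω + Hf ω + Hf ω * (-β))]
      · -- below D : Y s ω = 0
        push_neg at hDω
        have hYz : Y s ω = 0 := by
          rw [hYdef]
          apply max_eq_right
          apply mul_nonpos_of_nonpos_of_nonneg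
          · linarith
          · exact inv_nonneg.mpr hK0.le
        have hA0z : A0 ω = 0 := by
          rw [hA0def]; simp only [hYz]
          apply max_eq_right; linarith
        have hUz : U ω = max (1-c) 0 := by
          rw [hUdef]; simp only [hYz]
          congr 1; ring
        have hminz : min (Y s ω) 1 = 0 := by rw [hYz]; simp
        have hb1 : Hf ω * ((μ[δ | ℱ s]) ω) ≤ Hf ω * 1 :=
          mul_le_mul_of_nonneg_left h1 (hH0 ω)
        have hHval : Hf ω = max (1-c) 0 / 2 := by
          simp only [hHdef]; rw [hA0z, hUz]; ring
        rw [hA0z, hUz, hminz, hHval]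
        rw [hHval] at hb1
        nlinarith [hb1]
    -- step 4 : integrate
    have hRHSint : Integrable
        (fun ω => (1-p) * A0 ω + p * U ω + (1-p) * max (1-c) 0 * (1 - min (Y s ω) 1)) μ := by
      apply Integrable.add
      · exact (hA0int.const_mul _).add (hUint.const_mul _)
      · apply Integrable.const_mul
        apply Integrable.sub (integrable_const 1)
        have : Integrable (fun ω => Y s ω - max (Y s ω - 1) 0) μ :=
          (hYint s).sub (hMint s 1)
        have e : (fun ω => min (Y s ω) 1) = fun ω => Y s ω - max (Y s ω - 1) 0 := by
          funext ω; exact drift_min_eq (Y s ω)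
        rwa [e]
    have hmain : (∫ ω, max (Y (s+1) ω - c) 0 ∂μ) ≤
        ∫ ω, ((1-p) * A0 ω + p * U ω + (1-p) * max (1-c) 0 * (1 - min (Y s ω) 1)) ∂μ := by
      have h0 : (∫ ω, max (Y (s+1) ω - c) 0 ∂μ)
          = ∫ ω, (μ[fun ω' => max (Y (s+1) ω' - c) 0 | ℱ s]) ω ∂μ :=
        (integral_condExp (ℱ.le s)).symm
      rw [h0]
      exact integral_mono_ae integrable_condExp hRHSint (hce_step.trans hstep3)
    -- expand the RHS integral
    have hexp : ∫ ω, ((1-p) * A0 ω + p * U ω + (1-p) * max (1-c) 0 * (1 - min (Y s ω) 1)) ∂μ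
        = (1-p) * (∫ ω, A0 ω ∂μ) + p * (∫ ω, U ω ∂μ)
          + (1-p) * max (1-c) 0 * (1 - ((∫ ω, Y s ω ∂μ) - (∫ ω, max (Y s ω - 1) 0 ∂μ))) := by
      have hminint : Integrable (fun ω => (1:ℝ) - min (Y s ω) 1) μ := by
        apply Integrable.sub (integrable_const 1)
        have e : (fun ω => min (Y s ω) 1) = fun ω => Y s ω - max (Y s ω - 1) 0 := by
          funext ω; exact drift_min_eq (Y s ω)
        rw [e]; exact (hYint s).sub (hMint s 1)
      have i1 : Integrable (fun ω => (1-p) * A0 ω + p * U ω) μ :=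
        (hA0int.const_mul _).add (hUint.const_mul _)
      have i2 : Integrable (fun ω => (1-p) * max (1-c) 0 * (1 - min (Y s ω) 1)) μ :=
        hminint.const_mul _
      have i3 : Integrable (fun ω => (1-p) * A0 ω) μ := hA0int.const_mul _
      have i4 : Integrable (fun ω => p * U ω) μ := hUint.const_mul _
      rw [integral_add i1 i2, integral_add i3 i4]
      rw [integral_const_mul, integral_const_mul, integral_const_mul]
      congr 1
      have e : (fun ω => (1:ℝ) - min (Y s ω) 1)
          = fun ω => (1:ℝ) - (Y s ω - max (Y s ω - 1) 0) := by
        funext ω; rw [drift_min_eq (Y s ω)]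
      rw [e]
      have i5 : Integrable (fun ω => Y s ω - max (Y s ω - 1) 0) μ :=
        (hYint s).sub (hMint s 1)
      rw [integral_sub (integrable_const 1) i5]
      rw [integral_sub (hYint s) (hMint s 1)]
      simp [measure_univ]
    rw [hexp] at hmain
    exact hmain
  -- main induction
  have main : ∀ (s : ℕ) (n : ℕ) (x : ℝ), 0 ≤ x → x < 1 →
      (∫ ω, max (Y s ω - (n + x)) 0 ∂μ) ≤ r^n * driftG β x := by
    intro s
    induction s with
    | zero =>
      intro n x hx0 hx1
      have hb : (∫ ω, max (Y 0 ω - (n + x)) 0 ∂μ) ≤ max (1 - (n+x)) 0 := by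
        have hmono : ∀ᵐ ω ∂μ, max (Y 0 ω - (n+x)) 0 ≤ max (1 - (n+x)) 0 := by
          filter_upwards [hYb 0] with ω h
          apply max_le_max _ le_rfl
          push_cast at h
          linarith
        calc ∫ ω, max (Y 0 ω - (n+x)) 0 ∂μ ≤ ∫ _ω, max (1-(n+x)) 0 ∂μ :=
              integral_mono_ae (hMint 0 _) (integrable_const _) hmono
          _ = max (1-(n+x)) 0 := by simp [measure_univ]
      rcases Nat.eq_zero_or_pos n with hn | hn
      · subst hn
        simp only [Nat.cast_zero, zero_add, pow_zero, one_mul] at hb ⊢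
        refine hb.trans ?_
        have h1 : max (1-x) 0 = 1-x := max_eq_left (by linarith)
        rw [h1]
        exact driftG_base hβ0 hβ1 hx0 hx1
      · have hn1 : (1:ℝ) ≤ (n:ℝ) := by exact_mod_cast hn
        have hz : max (1-((n:ℝ)+x)) 0 = 0 := max_eq_right (by linarith)
        rw [hz] at hb
        refine hb.trans ?_
        exact mul_nonneg (pow_nonneg hr0 n) (driftG_nonneg hβ0 hβ1 hx0 hx1)
    | succ s ih =>
      intro n x hx0 hx1
      rcases Nat.eq_zero_or_pos n with hn | hn
      · -- boundary case n = 0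
        subst hn
        simp only [Nat.cast_zero, zero_add, pow_zero, one_mul]
        have hkey := key s x hx0
        -- rewrite the (c-1) term
        have e1 : (∫ ω, max (Y s ω - (x-1)) 0 ∂μ) = (∫ ω, Y s ω ∂μ) + (1-x) := by
          have e : (fun ω => max (Y s ω - (x-1)) 0) = fun ω => Y s ω + (1-x) := by
            funext ω
            rw [max_eq_left (by have := hY0 s ω; linarith)]
            ring
          rw [e, integral_add (hYint s) (integrable_const _)]
          simp [measure_univ]
        rw [e1] at hkey
        have hmax1x : max (1-x) 0 = 1-x := max_eq_left (by linarith)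
        rw [hmax1x] at hkey
        -- IH bounds
        have hM0 : (∫ ω, Y s ω ∂μ) ≤ driftG β 0 := by
          have h := ih 0 0 le_rfl (by norm_num)
          simp only [Nat.cast_zero, add_zero, sub_zero, pow_zero, one_mul] at h
          have e : (∫ ω, max (Y s ω) 0 ∂μ) = ∫ ω, Y s ω ∂μ :=
            integral_congr_ae (Filter.EventuallyEq.of_eq
              (funext fun ω => max_eq_left (hY0 s ω)))
          rwa [e] at h
        have hM1 : (∫ ω, max (Y s ω - 1) 0 ∂μ) ≤ r * driftG β 0 := by
          have h := ih 1 0 le_rfl (by norm_num)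
          simp only [Nat.cast_one, add_zero, pow_one] at h
          exact h
        have hMx1 : (∫ ω, max (Y s ω - (x+1)) 0 ∂μ) ≤ r * driftG β x := by
          have h := ih 1 x hx0 hx1
          simp only [Nat.cast_one, pow_one] at h
          have e : (fun ω => max (Y s ω - (1+x)) 0) = fun ω => max (Y s ω - (x+1)) 0 := by
            funext ω; rw [add_comm]
          rw [e] at h
          exact h
        have hM1M0 : (∫ ω, max (Y s ω - 1) 0 ∂μ) ≤ ∫ ω, Y s ω ∂μ := by
          apply integral_mono_ae (hMint s 1) (hYint s)
          filter_upwards with ω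
          have h1 := hY0 s ω
          exact max_le (by linarith) h1
        set M0 := ∫ ω, Y s ω ∂μ with hM0def
        set M1 := ∫ ω, max (Y s ω - 1) 0 ∂μ with hM1def
        set Mx1 := ∫ ω, max (Y s ω - (x+1)) 0 ∂μ with hMx1def
        set κ : ℝ := p - (1-p)*(1-x) with hκdef
        have heq : (1-p) * Mx1 + p * (M0 + (1-x)) + (1-p) * (1-x) * (1 - (M0 - M1))
            = (1-p) * Mx1 + (1-x) + κ * M0 + ((1-p)*(1-x)) * M1 := by
          rw [hκdef]; ring
        rw [heq] at hkey
        have h2 : (1-p) * Mx1 ≤ (1-p) * (r * driftG β x) :=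
          mul_le_mul_of_nonneg_left hMx1 (by linarith)
        by_cases hbr : x ≤ 1 - r
        · -- κ ≤ 0 branch
          have hκneg : κ ≤ 0 := by
            rw [hκdef, hpdef, hrdef] at *
            exact driftG_kneg hβ0 (by rw [← hrdef]; exact hbr)
          have h1 : κ * M0 ≤ κ * M1 := mul_le_mul_of_nonpos_left hM1M0 hκneg
          have h3 : p * M1 ≤ p * (r * driftG β 0) := mul_le_mul_of_nonneg_left hM1 hp0
          have h4 : κ * M1 + ((1-p)*(1-x)) * M1 = p * M1 := by rw [hκdef]; ring
          have hlo1 : (1 - (1-β)/2) * ((1-β)/(1+β) * driftG β x) + (1-x)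
              + (1-β)/2 * ((1-β)/(1+β) * driftG β 0) = driftG β x :=
            driftG_lo1 hβ0 (by rw [hrdef] at hbr; exact hbr)
          rw [← hpdef, ← hrdef] at hlo1
          linarith
        · -- κ ≥ 0 branch
          have hκpos : 0 ≤ κ := by
            rw [hκdef, hpdef]
            exact driftG_kpos hβ0 (by rw [← hrdef]; exact hbr)
          have h1 : κ * M0 ≤ κ * driftG β 0 := mul_le_mul_of_nonneg_left hM0 hκpos
          have h3 : ((1-p)*(1-x)) * M1 ≤ ((1-p)*(1-x)) * (r * driftG β 0) :=
            mul_le_mul_of_nonneg_left hM1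
              (mul_nonneg (by linarith) (by linarith))
          have hlo2 : (1 - (1-β)/2) * ((1-β)/(1+β) * driftG β x) + (1-x)
              + ((1-β)/2 - (1 - (1-β)/2)*(1-x)) * driftG β 0
              + (1 - (1-β)/2)*(1-x) * ((1-β)/(1+β) * driftG β 0) = driftG β x :=
            driftG_lo2 hβ0 (by rw [hrdef] at hbr; exact hbr)
          rw [← hpdef, ← hrdef, ← hκdef] at hlo2
          linarith
      · -- interior case n = m+1
        obtain ⟨m, rfl⟩ : ∃ m, n = m + 1 := ⟨n-1, (Nat.succ_pred_eq_of_pos hn).symm⟩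
        have hc0 : (0:ℝ) ≤ ((m+1:ℕ):ℝ) + x := by positivity
        have hkey := key s (((m+1:ℕ):ℝ) + x) hc0
        have hcast1 : (fun ω => max (Y s ω - (((m+1:ℕ):ℝ) + x + 1)) 0)
            = fun ω => max (Y s ω - (((m+2:ℕ):ℝ) + x)) 0 := by
          funext ω; congr 1; push_cast; ring
        have hcast2 : (fun ω => max (Y s ω - (((m+1:ℕ):ℝ) + x - 1)) 0)
            = fun ω => max (Y s ω - ((m:ℝ) + x)) 0 := by
          funext ω; congr 1; push_cast; ring
        rw [hcast1, hcast2] at hkey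
        have hz : max (1 - (((m+1:ℕ):ℝ) + x)) 0 = 0 := by
          apply max_eq_right
          have : (0:ℝ) ≤ (m:ℝ) := Nat.cast_nonneg m
          push_cast
          linarith
        rw [hz] at hkey
        simp only [mul_zero, zero_mul, add_zero] at hkey
        have ih2 := ih (m+2) x hx0 hx1
        have ih0 := ih m x hx0 hx1
        have h2 : (1-p) * (∫ ω, max (Y s ω - (((m+2:ℕ):ℝ) + x)) 0 ∂μ)
            ≤ (1-p) * (r^(m+2) * driftG β x) :=
          mul_le_mul_of_nonneg_left ih2 (by linarith)
        have h3 : p * (∫ ω, max (Y s ω - ((m:ℝ) + x)) 0 ∂μ)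
            ≤ p * (r^m * driftG β x) :=
          mul_le_mul_of_nonneg_left ih0 hp0
        have hhi : (1 - (1-β)/2) * (((1-β)/(1+β))^(m+2) * driftG β x)
            + (1-β)/2 * (((1-β)/(1+β))^m * driftG β x)
            = ((1-β)/(1+β))^(m+1) * driftG β x := driftG_hi hβ0 x m
        rw [← hpdef, ← hrdef] at hhi
        linarith
  -- conclusion
  have hM0fin : (∫ ω, Y t ω ∂μ) ≤ driftG β 0 := by
    have h := main t 0 0 le_rfl (by norm_num)
    simp only [Nat.cast_zero, add_zero, sub_zero, pow_zero, one_mul] at h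
    have e : (∫ ω, max (Y t ω) 0 ∂μ) = ∫ ω, Y t ω ∂μ :=
      integral_congr_ae (Filter.EventuallyEq.of_eq
        (funext fun ω => max_eq_left (hY0 t ω)))
    rwa [e] at h
  have hΓle : ∀ ω, Γ t ω ≤ a + K * Y t ω := by
    intro ω
    have h1 : (Γ t ω - a) * K⁻¹ ≤ Y t ω := le_max_left _ _
    have h2 := mul_le_mul_of_nonneg_left h1 hK0.le
    have h3 : K * ((Γ t ω - a) * K⁻¹) = Γ t ω - a := by
      field_simp
    rw [h3] at h2
    linarith
  have hΓb : ∀ s : ℕ, ∀ᵐ ω ∂μ, |Γ s ω| ≤ |Γ 0 ω| + K * s := by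
    intro s
    induction s with
    | zero => filter_upwards with ω; simp
    | succ s ihs =>
      filter_upwards [ihs, hbdd s] with ω h1 h2
      have h3 := abs_sub_abs_le_abs_sub (Γ (s+1) ω) (Γ s ω)
      push_cast
      push_cast at h1
      linarith
  have hΓtint : Integrable (Γ t) μ := by
    refine (hΓ0int.abs.add (integrable_const (K * t))).mono'
      (((hadapted t).mono (ℱ.le t) le_rfl).aestronglyMeasurable) ?_
    filter_upwards [hΓb t] with ω h
    rw [Real.norm_eq_abs]
    simpa using h
  have hfinal : ∫ ω, Γ t ω ∂μ ≤ a + K * driftG β 0 := by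
    have hint2 : Integrable (fun ω => a + K * Y t ω) μ :=
      (integrable_const a).add ((hYint t).const_mul K)
    calc ∫ ω, Γ t ω ∂μ ≤ ∫ ω, (a + K * Y t ω) ∂μ :=
          integral_mono_ae hΓtint hint2 (Filter.Eventually.of_forall hΓle)
      _ = a + K * ∫ ω, Y t ω ∂μ := by
          rw [integral_add (integrable_const a) ((hYint t).const_mul K)]
          rw [integral_const]
          simp only [probReal_univ, smul_eq_mul, one_mul]
          rw [integral_const_mul]
      _ ≤ a + K * driftG β 0 := by
          have := mul_le_mul_of_nonneg_left hM0fin hK0.le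
          linarith
  refine hfinal.trans ?_
  have hKne : K ≠ 0 := ne_of_gt hK0
  have hηne : η ≠ 0 := ne_of_gt hη
  have hend : a + K * driftG β 0 = K * (1 + (⌈D / K⌉ : ℝ)) + K * ((K - η) / (2 * η)) := by
    rw [driftG_zero hβ0 hβ1, hadef, hβdef]
    field_simp
    ring
  linarith [hend]
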